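/- arXiv:2310.07512 — 2 statements merged into one kernel-verified Lean document; each statement's English description precedes it below -/
import Mathlib

section
/- Let α > 2 and R > 0, and let F : ℂ⁴ → ℝ be of class C² (in the real sense) with F(0) = 0, ∇F(0) = 0, D²F(0) = 0, and |D²F(φ)| ≤ |φ|^{α−2} for all φ with |φ| ≥ R. Then for every ε > 0 there exists μ_ε > 0 such that F(φ) ≤ (ε/2)|φ|² + (μ_ε/α)|φ|^α for all φ ∈ ℂ⁴. -/
open Metric Real

set_option maxHeartbeats 1000000 in
/-- Under (H1)-(H2) with `F(0) = 0`, for every `ε > 0` there is `μ_ε > 0`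
with `F(φ) ≤ (ε/2)|φ|² + (μ_ε/α)|φ|^α` for all `φ`. -/
theorem statement1 (α R : ℝ) (hα : 2 < α) (hR : 0 < R)
    (F : EuclideanSpace ℂ (Fin 4) → ℝ) (hF : ContDiff ℝ 2 F)
    (hF0 : F 0 = 0)
    (gradF : EuclideanSpace ℂ (Fin 4) → EuclideanSpace ℂ (Fin 4))
    (hgrad : ∀ φ h : EuclideanSpace ℂ (Fin 4),
      fderiv ℝ F φ h = (inner ℂ (gradF φ) h : ℂ).re)
    (hgrad0 : gradF 0 = 0)
    (hD2F0 : iteratedFDeriv ℝ 2 F 0 = 0)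
    (hD2F : ∀ φ : EuclideanSpace ℂ (Fin 4), R ≤ ‖φ‖ →
      ‖iteratedFDeriv ℝ 2 F φ‖ ≤ ‖φ‖ ^ (α - 2)) :
    ∀ ε > 0, ∃ με > 0, ∀ φ : EuclideanSpace ℂ (Fin 4),
      F φ ≤ ε / 2 * ‖φ‖ ^ 2 + με / α * ‖φ‖ ^ α := by
  intro ε hε
  have hα0 : (0:ℝ) < α := by linarith
  have hα2 : (0:ℝ) < α - 2 := by linarith
  -- continuity of the second derivative
  have hF' : ContDiff ℝ ((2:ℕ):ℕ∞) F := by exact_mod_cast hF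
  have hcont : Continuous fun ψ : EuclideanSpace ℂ (Fin 4) => iteratedFDeriv ℝ 2 F ψ :=
    hF'.continuous_iteratedFDeriv le_rfl
  -- smallness near 0
  have h0 : ∀ᶠ ψ : EuclideanSpace ℂ (Fin 4) in nhds 0, ‖iteratedFDeriv ℝ 2 F ψ‖ ≤ ε / 2 := by
    have : Continuous fun ψ : EuclideanSpace ℂ (Fin 4) => ‖iteratedFDeriv ℝ 2 F ψ‖ := hcont.norm
    have h := this.continuousAt (x := (0:EuclideanSpace ℂ (Fin 4)))
    have h2 : ‖iteratedFDeriv ℝ 2 F (0:EuclideanSpace ℂ (Fin 4))‖ = 0 := by rw [hD2F0]; simp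
    filter_upwards [h.preimage_mem_nhds (Iio_mem_nhds (show ‖iteratedFDeriv ℝ 2 F (0:EuclideanSpace ℂ (Fin 4))‖ < ε/2 by rw [h2]; positivity))] with ψ hψ
    exact le_of_lt (by simpa using hψ)
  obtain ⟨δ, hδpos, hδ⟩ : ∃ δ > 0, ∀ ψ : EuclideanSpace ℂ (Fin 4), ‖ψ‖ ≤ δ →
      ‖iteratedFDeriv ℝ 2 F ψ‖ ≤ ε / 2 := by
    rcases Metric.eventually_nhds_iff_ball.1 h0 with ⟨r, hr, hball⟩
    exact ⟨r/2, by positivity, fun ψ hψ => hball ψ (by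
      simp only [mem_ball, dist_zero_right]; linarith)⟩
  -- bound on the closed ball of radius R
  obtain ⟨C, hC⟩ : ∃ C, ∀ ψ ∈ closedBall (0:EuclideanSpace ℂ (Fin 4)) R, ‖iteratedFDeriv ℝ 2 F ψ‖ ≤ C :=
    (isCompact_closedBall (0:EuclideanSpace ℂ (Fin 4)) R).exists_bound_of_continuousOn hcont.continuousOn
  have hC0 : 0 ≤ C := le_trans (norm_nonneg _) (hC 0 (by simp [le_of_lt hR]))
  set μ : ℝ := max 1 (C / δ ^ (α - 2)) with hμdef
  have hμ1 : (1:ℝ) ≤ μ := le_max_left _ _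
  have hμ0 : (0:ℝ) < μ := lt_of_lt_of_le one_pos hμ1
  -- global pointwise bound on the second derivative
  have key : ∀ ψ : EuclideanSpace ℂ (Fin 4), ‖iteratedFDeriv ℝ 2 F ψ‖ ≤ ε / 2 + μ * ‖ψ‖ ^ (α - 2) := by
    intro ψ
    have hψ0 : (0:ℝ) ≤ ‖ψ‖ := norm_nonneg _
    have hpow0 : 0 ≤ ‖ψ‖ ^ (α - 2) := rpow_nonneg hψ0 _
    rcases le_or_gt ‖ψ‖ δ with h1 | h1
    · have := hδ ψ h1
      nlinarith [mul_nonneg (le_of_lt hμ0) hpow0]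
    · have hmono : δ ^ (α - 2) ≤ ‖ψ‖ ^ (α - 2) :=
        rpow_le_rpow (le_of_lt hδpos) (le_of_lt h1) (le_of_lt hα2)
      have hδpow : (0:ℝ) < δ ^ (α - 2) := rpow_pos_of_pos hδpos _
      rcases le_or_gt ‖ψ‖ R with h2 | h2
      · have hCb := hC ψ (by simpa [mem_closedBall, dist_zero_right] using h2)
        have : C ≤ μ * ‖ψ‖ ^ (α - 2) := by
          have h3 : C / δ ^ (α - 2) ≤ μ := le_max_right _ _
          have h4 : C = (C / δ ^ (α - 2)) * δ ^ (α - 2) := by field_simp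
          calc C = (C / δ ^ (α - 2)) * δ ^ (α - 2) := h4
            _ ≤ μ * ‖ψ‖ ^ (α - 2) := by
              apply mul_le_mul h3 hmono (le_of_lt hδpow) (le_of_lt hμ0)
        linarith [hCb]
      · have := hD2F ψ (le_of_lt h2)
        nlinarith [mul_le_mul_of_nonneg_right hμ1 hpow0]
  -- fderiv F 0 = 0
  have hf0 : fderiv ℝ F 0 = 0 := by
    ext h
    rw [hgrad, hgrad0]
    simp
  -- differentiability of F and fderiv F
  have hFd : Differentiable ℝ F := hF.differentiable (by norm_num)
  have hdF : ContDiff ℝ 1 (fderiv ℝ F) := hF.fderiv_right (by norm_num)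
  have hdFd : Differentiable ℝ (fderiv ℝ F) := hdF.differentiable (by norm_num)
  -- norm of fderiv of fderiv F
  have hnorm : ∀ ψ : EuclideanSpace ℂ (Fin 4), ‖fderiv ℝ (fderiv ℝ F) ψ‖ = ‖iteratedFDeriv ℝ 2 F ψ‖ := by
    intro ψ
    rw [← norm_iteratedFDeriv_fderiv (n := 1)]
    have : fderiv ℝ (fderiv ℝ F) ψ
        = continuousMultilinearCurryFin1 ℝ (EuclideanSpace ℂ (Fin 4)) (EuclideanSpace ℂ (Fin 4) →L[ℝ] ℝ)
            (iteratedFDeriv ℝ 1 (fderiv ℝ F) ψ) := by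
      ext v
      simp [iteratedFDeriv_one_apply, Fin.snoc]
    rw [this, LinearIsometryEquiv.norm_map]
  -- first derivative bound via MVT
  have gradbound : ∀ φ : EuclideanSpace ℂ (Fin 4), ‖fderiv ℝ F φ‖ ≤ (ε / 2 + μ * ‖φ‖ ^ (α - 2)) * ‖φ‖ := by
    intro φ
    have hconv : Convex ℝ (closedBall (0:EuclideanSpace ℂ (Fin 4)) ‖φ‖) := convex_closedBall _ _
    have := hconv.norm_image_sub_le_of_norm_fderiv_le
      (f := fderiv ℝ F) (C := ε / 2 + μ * ‖φ‖ ^ (α - 2))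
      (fun x _ => hdFd x)
      (fun x hx => by
        rw [hnorm x]
        refine le_trans (key x) ?_
        have hx' : ‖x‖ ≤ ‖φ‖ := by simpa [mem_closedBall, dist_zero_right] using hx
        have : ‖x‖ ^ (α - 2) ≤ ‖φ‖ ^ (α - 2) :=
          rpow_le_rpow (norm_nonneg _) hx' (le_of_lt hα2)
        nlinarith)
      (x := (0:EuclideanSpace ℂ (Fin 4))) (y := φ)
      (by simp) (mem_closedBall_zero_iff.2 le_rfl)
    simpa [hf0] using this
  -- F bound via MVT
  have Fbound : ∀ φ : EuclideanSpace ℂ (Fin 4), F φ ≤ (ε / 2 + μ * ‖φ‖ ^ (α - 2)) * ‖φ‖ * ‖φ‖ := by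
    intro φ
    have hconv : Convex ℝ (closedBall (0:EuclideanSpace ℂ (Fin 4)) ‖φ‖) := convex_closedBall _ _
    have hφpow : 0 ≤ ‖φ‖ ^ (α - 2) := rpow_nonneg (norm_nonneg _) _
    have := hconv.norm_image_sub_le_of_norm_fderiv_le
      (f := F) (C := (ε / 2 + μ * ‖φ‖ ^ (α - 2)) * ‖φ‖)
      (fun x _ => hFd x)
      (fun x hx => by
        refine le_trans (gradbound x) ?_
        have hx' : ‖x‖ ≤ ‖φ‖ := by simpa [mem_closedBall, dist_zero_right] using hx
        have h1 : ‖x‖ ^ (α - 2) ≤ ‖φ‖ ^ (α - 2) :=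
          rpow_le_rpow (norm_nonneg _) hx' (le_of_lt hα2)
        refine mul_le_mul ?_ hx' (norm_nonneg x) (by positivity)
        linarith [mul_le_mul_of_nonneg_left h1 (le_of_lt hμ0)])
      (x := (0:EuclideanSpace ℂ (Fin 4))) (y := φ)
      (by simp) (mem_closedBall_zero_iff.2 le_rfl)
    have h2 : F φ ≤ ‖F φ - F 0‖ := by
      rw [hF0]
      simpa using le_abs_self (F φ)
    calc F φ ≤ ‖F φ - F 0‖ := h2
      _ ≤ (ε / 2 + μ * ‖φ‖ ^ (α - 2)) * ‖φ‖ * ‖φ - 0‖ := this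
      _ = (ε / 2 + μ * ‖φ‖ ^ (α - 2)) * ‖φ‖ * ‖φ‖ := by rw [sub_zero]
  refine ⟨α * μ, by positivity, fun φ => ?_⟩
  have hμα : α * μ / α = μ := by field_simp
  rw [hμα]
  have hpow : ‖φ‖ ^ (α - 2) * ‖φ‖ ^ (2:ℕ) = ‖φ‖ ^ α := by
    rw [← rpow_natCast ‖φ‖ 2, ← rpow_add' (norm_nonneg φ) (by push_cast; linarith)]
    norm_num
  calc F φ ≤ (ε / 2 + μ * ‖φ‖ ^ (α - 2)) * ‖φ‖ * ‖φ‖ := Fbound φ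
    _ = ε / 2 * ‖φ‖ ^ 2 + μ * (‖φ‖ ^ (α - 2) * ‖φ‖ ^ (2:ℕ)) := by ring
    _ = ε / 2 * ‖φ‖ ^ 2 + μ * ‖φ‖ ^ α := by rw [hpow]
end

section
/- Let α > 2 and R > 0, and let F : ℂ⁴ → ℝ be of class C² (in the real sense) with ∇F(0) = 0, D²F(0) = 0, and |D²F(φ)| ≤ |φ|^{α−2} for all φ with |φ| ≥ R. Then for every ε > 0 there exists δ_ε > 0 such that |∇F(φ+ψ) − ∇F(φ)| ≤ (ε + δ_ε(|φ|^{α−2} + |ψ|^{α−2}))|ψ| for all φ, ψ ∈ ℂ⁴. -/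
open Real

/-- `(a+b)^p ≤ 2^p * (a^p + b^p)` for nonneg `a, b` and `0 ≤ p`. -/
lemma add_rpow_le_two_rpow_mul (a b p : ℝ) (ha : 0 ≤ a) (hb : 0 ≤ b) (hp : 0 ≤ p) :
    (a + b) ^ p ≤ 2 ^ p * (a ^ p + b ^ p) := by
  have h1 : a + b ≤ 2 * max a b := by
    rcases le_total a b with h | h <;> simp [max_eq_right, max_eq_left, h] <;> linarith
  have hmax : (0:ℝ) ≤ max a b := le_max_of_le_left ha
  calc (a + b) ^ p ≤ (2 * max a b) ^ p :=
        Real.rpow_le_rpow (by linarith) h1 hp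
    _ = 2 ^ p * (max a b) ^ p := Real.mul_rpow (by norm_num) hmax
    _ ≤ 2 ^ p * (a ^ p + b ^ p) := by
        apply mul_le_mul_of_nonneg_left _ (Real.rpow_nonneg (by norm_num) p)
        rcases le_total a b with h | h
        · rw [max_eq_right h]
          have := Real.rpow_nonneg ha p
          linarith
        · rw [max_eq_left h]
          have := Real.rpow_nonneg hb p
          linarith

/-- Under (H1)-(H2), for every `ε > 0` there is `δ_ε > 0` with
`|∇F(φ+ψ) − ∇F(φ)| ≤ (ε + δ_ε(|φ|^(α−2) + |ψ|^(α−2)))|ψ|` for all `φ, ψ`. -/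
theorem statement2 (α R : ℝ) (hα : 2 < α) (hR : 0 < R)
    (F : EuclideanSpace ℂ (Fin 4) → ℝ) (hF : ContDiff ℝ 2 F)
    (gradF : EuclideanSpace ℂ (Fin 4) → EuclideanSpace ℂ (Fin 4))
    (hgrad : ∀ φ h : EuclideanSpace ℂ (Fin 4),
      fderiv ℝ F φ h = (inner ℂ (gradF φ) h : ℂ).re)
    (hgrad0 : gradF 0 = 0)
    (hD2F0 : iteratedFDeriv ℝ 2 F 0 = 0)
    (hD2F : ∀ φ : EuclideanSpace ℂ (Fin 4), R ≤ ‖φ‖ →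
      ‖iteratedFDeriv ℝ 2 F φ‖ ≤ ‖φ‖ ^ (α - 2)) :
    ∀ ε > 0, ∃ δε > 0, ∀ φ ψ : EuclideanSpace ℂ (Fin 4),
      ‖gradF (φ + ψ) - gradF φ‖ ≤ (ε + δε * (‖φ‖ ^ (α - 2) + ‖ψ‖ ^ (α - 2))) * ‖ψ‖ := by
  set p := α - 2 with hpdef
  have hp : 0 < p := by simp [hpdef]; linarith
  intro ε hε
  -- Step 1: `‖gradF a - gradF b‖ ≤ ‖fderiv F a - fderiv F b‖`.
  have key : ∀ a b : EuclideanSpace ℂ (Fin 4), ‖gradF a - gradF b‖ ≤ ‖fderiv ℝ F a - fderiv ℝ F b‖ := by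
    intro a b
    set v := gradF a - gradF b with hv
    have h1 : (fderiv ℝ F a - fderiv ℝ F b) v = ‖v‖ ^ 2 := by
      rw [ContinuousLinearMap.sub_apply, hgrad, hgrad]
      have : (inner ℂ (gradF a) v : ℂ).re - (inner ℂ (gradF b) v : ℂ).re
          = (inner ℂ v v : ℂ).re := by
        rw [hv, inner_sub_left, Complex.sub_re]
      rw [this]
      simpa using (inner_self_eq_norm_sq (𝕜 := ℂ) v)
    have h2 : ‖v‖ ^ 2 ≤ ‖fderiv ℝ F a - fderiv ℝ F b‖ * ‖v‖ := by
      rw [← h1]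
      exact le_trans (le_abs_self _) ((fderiv ℝ F a - fderiv ℝ F b).le_opNorm v)
    rcases eq_or_lt_of_le (norm_nonneg v) with h0 | h0
    · rw [← h0]; exact norm_nonneg _
    · have := h2
      rw [sq] at this
      exact le_of_mul_le_mul_right this h0
  -- Step 2: a pointwise bound `‖D²F x‖ ≤ ε + δ * ‖x‖^p`.
  have hcont : Continuous fun x : EuclideanSpace ℂ (Fin 4) => ‖iteratedFDeriv ℝ 2 F x‖ :=
    (hF.continuous_iteratedFDeriv (le_refl 2)).norm
  have h0 : Filter.Tendsto (fun x : EuclideanSpace ℂ (Fin 4) => ‖iteratedFDeriv ℝ 2 F x‖) (nhds 0)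
      (nhds 0) := by
    have := hcont.continuousAt (x := (0 : EuclideanSpace ℂ (Fin 4)))
    simpa [ContinuousAt, hD2F0] using this
  obtain ⟨r, hr0, hr⟩ : ∃ r > 0, ∀ x : EuclideanSpace ℂ (Fin 4), ‖x‖ ≤ r → ‖iteratedFDeriv ℝ 2 F x‖ ≤ ε := by
    have := Metric.tendsto_nhds.mp h0 ε hε
    rw [Metric.eventually_nhds_iff] at this
    obtain ⟨d, hd, hball⟩ := this
    refine ⟨d / 2, by linarith, fun x hx => ?_⟩
    have : dist x 0 < d := by
      rw [dist_zero_right]; linarith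
    have := hball this
    rw [Real.dist_eq, abs_sub_comm, abs_of_nonpos (by simp [norm_nonneg])] at this
    simp at this ⊢
    linarith
  obtain ⟨M, hM⟩ : ∃ M : ℝ, ∀ x : EuclideanSpace ℂ (Fin 4), ‖x‖ ≤ R → ‖iteratedFDeriv ℝ 2 F x‖ ≤ M := by
    obtain ⟨M, hM⟩ := (isCompact_closedBall (0 : EuclideanSpace ℂ (Fin 4)) R).exists_bound_of_continuousOn
      ((hF.continuous_iteratedFDeriv (le_refl 2)).continuousOn)
    exact ⟨M, fun x hx => hM x (by simpa [Metric.mem_closedBall, dist_zero_right] using hx)⟩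
  have hMnn : 0 ≤ M := le_trans (norm_nonneg _) (hM 0 (by simp [le_of_lt hR]))
  set δ := max 1 (M / r ^ p) with hδdef
  have hδ1 : (1:ℝ) ≤ δ := le_max_left _ _
  have hδpos : 0 < δ := lt_of_lt_of_le one_pos hδ1
  have hbound : ∀ x : EuclideanSpace ℂ (Fin 4), ‖iteratedFDeriv ℝ 2 F x‖ ≤ ε + δ * ‖x‖ ^ p := by
    intro x
    have hxnn : (0:ℝ) ≤ ‖x‖ := norm_nonneg x
    have hrpnn : 0 ≤ ‖x‖ ^ p := Real.rpow_nonneg hxnn p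
    rcases le_or_gt ‖x‖ r with h | h
    · have := hr x h
      nlinarith [mul_nonneg (le_of_lt hδpos) hrpnn]
    · rcases le_or_gt ‖x‖ R with h2 | h2
      · have hMx := hM x h2
        have hrp : 0 < r ^ p := Real.rpow_pos_of_pos hr0 p
        have hmono : r ^ p ≤ ‖x‖ ^ p := Real.rpow_le_rpow (le_of_lt hr0) (le_of_lt h) (le_of_lt hp)
        have step : M ≤ (M / r ^ p) * ‖x‖ ^ p := by
          rw [div_mul_eq_mul_div, le_div_iff₀ hrp]
          exact mul_le_mul_of_nonneg_left hmono hMnn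
        have hle : (M / r ^ p) * ‖x‖ ^ p ≤ δ * ‖x‖ ^ p :=
          mul_le_mul_of_nonneg_right (le_max_right _ _) hrpnn
        linarith
      · have := hD2F x (le_of_lt h2)
        have : ‖iteratedFDeriv ℝ 2 F x‖ ≤ δ * ‖x‖ ^ p := by
          calc ‖iteratedFDeriv ℝ 2 F x‖ ≤ ‖x‖ ^ p := this
            _ ≤ δ * ‖x‖ ^ p := le_mul_of_one_le_left hrpnn hδ1
        linarith
  -- Step 3: the fderiv of fderiv has the same norm as D²F.
  have hnorm2 : ∀ x : EuclideanSpace ℂ (Fin 4), ‖fderiv ℝ (fderiv ℝ F) x‖ = ‖iteratedFDeriv ℝ 2 F x‖ := by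
    intro x
    have e1 : ‖iteratedFDeriv ℝ 0 (fderiv ℝ (fderiv ℝ F)) x‖ = ‖fderiv ℝ (fderiv ℝ F) x‖ := by
      simp [norm_iteratedFDeriv_zero]
    have e2 : ‖iteratedFDeriv ℝ 0 (fderiv ℝ (fderiv ℝ F)) x‖
        = ‖iteratedFDeriv ℝ 1 (fderiv ℝ F) x‖ := norm_iteratedFDeriv_fderiv
    have e3 : ‖iteratedFDeriv ℝ 1 (fderiv ℝ F) x‖ = ‖iteratedFDeriv ℝ 2 F x‖ :=
      norm_iteratedFDeriv_fderiv
    rw [← e1, e2, e3]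
  have hdiff : Differentiable ℝ (fderiv ℝ F) := by
    have : ContDiff ℝ 1 (fderiv ℝ F) := hF.fderiv_right (by norm_num)
    exact this.differentiable one_ne_zero
  -- conclusion
  refine ⟨δ * 2 ^ p, mul_pos hδpos (Real.rpow_pos_of_pos two_pos p), fun φ ψ => ?_⟩
  have hsub : segment ℝ φ (φ + ψ) ⊆ Metric.closedBall 0 (‖φ‖ + ‖ψ‖) := by
    apply (convex_closedBall (0 : EuclideanSpace ℂ (Fin 4)) (‖φ‖ + ‖ψ‖)).segment_subset
    · simp [norm_nonneg]
    · simp only [Metric.mem_closedBall, dist_zero_right]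
      exact norm_add_le φ ψ
  set C := ε + δ * (‖φ‖ + ‖ψ‖) ^ p with hC
  have hCbound : ∀ x ∈ segment ℝ φ (φ + ψ), ‖fderiv ℝ (fderiv ℝ F) x‖ ≤ C := by
    intro x hx
    have hxle : ‖x‖ ≤ ‖φ‖ + ‖ψ‖ := by
      have := hsub hx
      simpa [Metric.mem_closedBall, dist_zero_right] using this
    have := hbound x
    rw [hnorm2]
    have hmono : ‖x‖ ^ p ≤ (‖φ‖ + ‖ψ‖) ^ p :=
      Real.rpow_le_rpow (norm_nonneg x) hxle (le_of_lt hp)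
    have : δ * ‖x‖ ^ p ≤ δ * (‖φ‖ + ‖ψ‖) ^ p :=
      mul_le_mul_of_nonneg_left hmono (le_of_lt hδpos)
    have hb := hbound x
    rw [hC]
    linarith
  have hMVT : ‖fderiv ℝ F (φ + ψ) - fderiv ℝ F φ‖ ≤ C * ‖(φ + ψ) - φ‖ :=
    (convex_segment φ (φ + ψ)).norm_image_sub_le_of_norm_fderiv_le
      (fun x _ => hdiff x) hCbound (left_mem_segment ℝ φ (φ + ψ))
      (right_mem_segment ℝ φ (φ + ψ))
  have hψ : (φ + ψ) - φ = ψ := by abel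
  rw [hψ] at hMVT
  have hCfinal : C ≤ ε + δ * 2 ^ p * (‖φ‖ ^ p + ‖ψ‖ ^ p) := by
    rw [hC]
    have := add_rpow_le_two_rpow_mul ‖φ‖ ‖ψ‖ p (norm_nonneg φ) (norm_nonneg ψ) (le_of_lt hp)
    have h2 : δ * (‖φ‖ + ‖ψ‖) ^ p ≤ δ * (2 ^ p * (‖φ‖ ^ p + ‖ψ‖ ^ p)) :=
      mul_le_mul_of_nonneg_left this (le_of_lt hδpos)
    linarith [h2]
  calc ‖gradF (φ + ψ) - gradF φ‖ ≤ ‖fderiv ℝ F (φ + ψ) - fderiv ℝ F φ‖ := key _ _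
    _ ≤ C * ‖ψ‖ := hMVT
    _ ≤ (ε + δ * 2 ^ p * (‖φ‖ ^ p + ‖ψ‖ ^ p)) * ‖ψ‖ :=
        mul_le_mul_of_nonneg_right hCfinal (norm_nonneg ψ)
end
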